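/- arXiv:1812.02138 — 2 statements merged into one kernel-verified Lean document; each statement's English description precedes it below -/
import Mathlib

section
/- Let H be a real Hilbert space, Ω ⊆ H a nonempty closed convex set, F : H → H monotone and L-Lipschitz continuous on Ω, and B : H ⇒ H maximal monotone with domain contained in Ω. Let {z_k}, {w_k}, {w'_k}, {z̃_k}, {ẑ_k}, {λ_k}, {α_k} be generated by Algorithm 3 (inertial under-relaxed Tseng's modified forward-backward method) with parameters α ∈ [0,1), σ ∈ (0,1), τ ∈ (0,1], and define ε_k := 0 and v_k := F(z̃_k) − F(w'_{k−1}) + (w_{k−1} − z̃_k)/λ_k for k ≥ 1. Then for all k ≥ 1: v_k ∈ F(z̃_k) + B(z̃_k), ‖λ_k v_k + z̃_k − w_{k−1}‖² ≤ σ²‖z̃_k − w_{k−1}‖², and z_k = w_{k−1} − τλ_k v_k; i.e., Algorithm 3 is a special instance of Algorithm 1 (inertial under-relaxed HPE) applied to T := F + B. -/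
open Filter Finset Topology Pointwise
open scoped RealInnerProductSpace

/-- A set-valued operator `T : H ⇒ H` is monotone. -/
def IsMonotoneOp {H : Type*} [NormedAddCommGroup H] [InnerProductSpace ℝ H]
    (T : H → Set H) : Prop :=
  ∀ ⦃z z' v v' : H⦄, v ∈ T z → v' ∈ T z' → 0 ≤ ⟪z - z', v - v'⟫

/-- `T` is maximal monotone: it is monotone and its graph is not properly contained in the
graph of any other monotone operator. -/
def IsMaximalMonotoneOp {H : Type*} [NormedAddCommGroup H] [InnerProductSpace ℝ H]
    (T : H → Set H) : Prop :=
  IsMonotoneOp T ∧ ∀ S : H → Set H, IsMonotoneOp S → (∀ z, T z ⊆ S z) → ∀ z, S z ⊆ T z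

/-- The ε-enlargement `T^ε` of a set-valued operator `T`. -/
def enl {H : Type*} [NormedAddCommGroup H] [InnerProductSpace ℝ H]
    (T : H → Set H) (ε : ℝ) (z : H) : Set H :=
  {v | ∀ z' v', v' ∈ T z' → ⟪z - z', v - v'⟫ ≥ -ε}

/-- Algorithm 3 (inertial under-relaxed Tseng's modified forward-backward
method) is a special instance of Algorithm 1 applied to `T := F + B`.  Indexing convention:
`z k` is the paper's `z_k` for `k ≥ 0`, the paper's `z_{−1} = z₀` being encoded by truncated
subtraction.  The projection `w' = P_Ω(w)` is encoded as the closest point of `Ω` to `w`, and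
the resolvent step `z̃_k = (λ_k B + I)⁻¹(u)` as `u − z̃_k ∈ λ_k B(z̃_k)`. -/
theorem stmt17
    {H : Type*} [NormedAddCommGroup H] [InnerProductSpace ℝ H] [CompleteSpace H]
    (Ω : Set H) (hΩne : Ω.Nonempty) (hΩcl : IsClosed Ω) (hΩcv : Convex ℝ Ω)
    (F : H → H) (L : ℝ) (hL : 0 < L)
    (hFmono : ∀ x ∈ Ω, ∀ y ∈ Ω, 0 ≤ ⟪x - y, F x - F y⟫)
    (hFlip : ∀ x ∈ Ω, ∀ y ∈ Ω, ‖F x - F y‖ ≤ L * ‖x - y‖)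
    (B : H → Set H) (hB : IsMaximalMonotoneOp B)
    (hdom : ∀ x : H, (B x).Nonempty → x ∈ Ω)
    (α σ τ : ℝ) (hα0 : 0 ≤ α) (hα1 : α < 1) (hσ0 : 0 < σ) (hσ1 : σ < 1)
    (hτ0 : 0 < τ) (hτ1 : τ ≤ 1)
    (z w w' ztil zhat v : ℕ → H) (lam αs : ℕ → ℝ)
    (hαs : ∀ k, 0 ≤ αs k ∧ αs k ≤ α)
    (hw : ∀ k, w k = z k + αs k • (z k - z (k - 1)))
    (hlam : ∀ k, 1 ≤ k → 0 < lam k ∧ lam k ≤ σ / L)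
    (hproj : ∀ k, w' k ∈ Ω ∧ ∀ u ∈ Ω, ‖w' k - w k‖ ≤ ‖u - w k‖)
    (hres : ∀ k, 1 ≤ k →
      w (k - 1) - lam k • F (w' (k - 1)) - ztil k ∈ lam k • B (ztil k))
    (hzhat : ∀ k, 1 ≤ k → zhat k = ztil k - lam k • (F (ztil k) - F (w' (k - 1))))
    (hz : ∀ k, 1 ≤ k → z k = (1 - τ) • w (k - 1) + τ • zhat k)
    (hv : ∀ k, 1 ≤ k →
      v k = F (ztil k) - F (w' (k - 1)) + (lam k)⁻¹ • (w (k - 1) - ztil k)) :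
    ∀ k, 1 ≤ k →
      v k - F (ztil k) ∈ B (ztil k) ∧
      ‖lam k • v k + ztil k - w (k - 1)‖ ^ 2 ≤ σ ^ 2 * ‖ztil k - w (k - 1)‖ ^ 2 ∧
      z k = w (k - 1) - (τ * lam k) • v k := by
  intro k hk
  obtain ⟨hl0, hls⟩ := hlam k hk
  have hlne : lam k ≠ 0 := ne_of_gt hl0
  obtain ⟨b, hbB, hb⟩ := Set.mem_smul_set.mp (hres k hk)
  -- notation
  set ww := w (k - 1) with hww
  set p := w' (k - 1) with hp
  have hbeq : b = (lam k)⁻¹ • (ww - ztil k) - F p := by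
    have h2 := congrArg (fun x => (lam k)⁻¹ • x) hb
    simp only [smul_smul, inv_mul_cancel₀ hlne, one_smul, smul_sub] at h2
    rw [h2, smul_sub]
    abel
  have hmem : v k - F (ztil k) ∈ B (ztil k) := by
    have : v k - F (ztil k) = b := by
      rw [hv k hk, hbeq]; abel
    rw [this]; exact hbB
  refine ⟨hmem, ?_, ?_⟩
  · -- the HPE error bound
    have key : lam k • v k + ztil k - ww = lam k • (F (ztil k) - F p) := by
      rw [hv k hk, smul_add, smul_smul, mul_inv_cancel₀ hlne, one_smul]
      abel
    have hztO : ztil k ∈ Ω := hdom _ ⟨b, hbB⟩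
    have hpO : p ∈ Ω := (hproj (k - 1)).1
    haveI : Nonempty Ω := hΩne.to_subtype
    have hinf : ‖ww - p‖ = ⨅ q : Ω, ‖ww - q‖ := by
      apply le_antisymm
      · apply le_ciInf; intro q
        have := (hproj (k - 1)).2 q q.2
        rw [norm_sub_rev, norm_sub_rev (q : H)] at this
        exact this
      · refine ciInf_le ⟨0, ?_⟩ (⟨p, hpO⟩ : Ω)
        rintro x ⟨q, rfl⟩
        positivity
    have hVI := (norm_eq_iInf_iff_real_inner_le_zero hΩcv hpO).mp hinf (ztil k) hztO
    have hproj2 : ‖ztil k - p‖ ^ 2 ≤ ‖ztil k - ww‖ ^ 2 := by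
      have expand : ‖ztil k - ww‖ ^ 2
          = ‖ztil k - p‖ ^ 2 - 2 * ⟪ztil k - p, ww - p⟫ + ‖ww - p‖ ^ 2 := by
        have : ztil k - ww = (ztil k - p) - (ww - p) := by abel
        rw [this, @norm_sub_sq_real]
      have hcomm : ⟪ztil k - p, ww - p⟫ = ⟪ww - p, ztil k - p⟫ := real_inner_comm _ _
      nlinarith [sq_nonneg ‖ww - p‖]
    have hlip : ‖F (ztil k) - F p‖ ≤ L * ‖ztil k - p‖ := hFlip _ hztO _ hpO
    rw [key, norm_smul, Real.norm_of_nonneg hl0.le, mul_pow]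
    have hlL : lam k * L ≤ σ := by
      rw [← le_div_iff₀ hL] at *
      exact hls
    have h1 : lam k * ‖F (ztil k) - F p‖ ≤ σ * ‖ztil k - p‖ := by
      nlinarith [mul_le_mul_of_nonneg_left hlip hl0.le,
        mul_le_mul_of_nonneg_right hlL (norm_nonneg (ztil k - p))]
    have h2 := mul_self_le_mul_self
      (by positivity : (0:ℝ) ≤ lam k * ‖F (ztil k) - F p‖) h1
    nlinarith [h2, hproj2, sq_nonneg σ, mul_le_mul_of_nonneg_left hproj2 (sq_nonneg σ)]
  · rw [hz k hk, hzhat k hk, hv k hk]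
    have hc : (τ * lam k) • ((lam k)⁻¹ • (ww - ztil k)) = τ • (ww - ztil k) := by
      rw [smul_smul, mul_assoc, mul_inv_cancel₀ hlne, mul_one]
    rw [smul_add, hc]
    module
end

section
/- Let H be a real Hilbert space, F : H → H a (1/L)-cocoercive map (L > 0), and B : H ⇒ H maximal monotone. Let {z_k}, {w_k}, {z̃_k}, {λ_k}, {α_k} be generated by Algorithm 4 (inertial under-relaxed forward-backward method) with parameters α ∈ [0,1), σ ∈ (0,1), τ ∈ (0,1], and define ε_k := L‖z̃_k − w_{k−1}‖²/4 and v_k := (w_{k−1} − z̃_k)/λ_k for k ≥ 1. Then for all k ≥ 1: v_k ∈ F^{ε_k}(z̃_k) + B(z̃_k) ⊆ (F+B)^{ε_k}(z̃_k), λ_k v_k + z̃_k − w_{k−1} = 0, 2λ_k ε_k ≤ σ²‖z̃_k − w_{k−1}‖², and z_k = w_{k−1} − τλ_k v_k; i.e., Algorithm 4 is a special instance of Algorithm 1 (inertial under-relaxed HPE) applied to T := F + B. -/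
open Filter Finset Topology Pointwise
open scoped RealInnerProductSpace

/-- Algorithm 4 (inertial under-relaxed forward-backward method), with
`ε_k := L‖z̃_k − w_{k−1}‖²/4` and `v_k := (w_{k−1} − z̃_k)/λ_k`, is a special instance of
Algorithm 1 applied to `T := F + B` (the operator `x ↦ {u | u − F x ∈ B x}`).  Here `F`,
viewed as the set-valued map `x ↦ {F x}`, has enlargement `F^ε = enl (fun x => {F x}) ε`.
Indexing convention: `z k` is the paper's `z_k` for `k ≥ 0`, the paper's `z_{−1} = z₀` being
encoded by truncated subtraction; the resolvent step is encoded as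
`w_{k−1} − λ_k F(w_{k−1}) − z̃_k ∈ λ_k B(z̃_k)`. -/
theorem stmt19
    {H : Type*} [NormedAddCommGroup H] [InnerProductSpace ℝ H] [CompleteSpace H]
    (F : H → H) (L : ℝ) (hL : 0 < L)
    (hcoco : ∀ x y : H, ⟪x - y, F x - F y⟫ ≥ (1 / L) * ‖F x - F y‖ ^ 2)
    (B : H → Set H) (hB : IsMaximalMonotoneOp B)
    (α σ τ : ℝ) (hα0 : 0 ≤ α) (hα1 : α < 1) (hσ0 : 0 < σ) (hσ1 : σ < 1)
    (hτ0 : 0 < τ) (hτ1 : τ ≤ 1)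
    (z w ztil v : ℕ → H) (lam αs ε : ℕ → ℝ)
    (hαs : ∀ k, 0 ≤ αs k ∧ αs k ≤ α)
    (hw : ∀ k, w k = z k + αs k • (z k - z (k - 1)))
    (hlam : ∀ k, 1 ≤ k → 0 < lam k ∧ lam k ≤ 2 * σ ^ 2 / L)
    (hres : ∀ k, 1 ≤ k →
      w (k - 1) - lam k • F (w (k - 1)) - ztil k ∈ lam k • B (ztil k))
    (hz : ∀ k, 1 ≤ k → z k = (1 - τ) • w (k - 1) + τ • ztil k)
    (hε : ∀ k, 1 ≤ k → ε k = L * ‖ztil k - w (k - 1)‖ ^ 2 / 4)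
    (hv : ∀ k, 1 ≤ k → v k = (lam k)⁻¹ • (w (k - 1) - ztil k)) :
    ∀ k, 1 ≤ k →
      (∃ u ∈ enl (fun x => ({F x} : Set H)) (ε k) (ztil k), v k - u ∈ B (ztil k)) ∧
      v k ∈ enl (fun x => {u : H | u - F x ∈ B x}) (ε k) (ztil k) ∧
      lam k • v k + ztil k - w (k - 1) = 0 ∧
      2 * lam k * ε k ≤ σ ^ 2 * ‖ztil k - w (k - 1)‖ ^ 2 ∧
      z k = w (k - 1) - (τ * lam k) • v k := by
  intro k hk
  obtain ⟨hlam0, hlamle⟩ := hlam k hk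
  have hlamne : lam k ≠ 0 := ne_of_gt hlam0
  set w' := w (k - 1) with hw'
  set zt := ztil k with hzt
  have hvk : v k = (lam k)⁻¹ • (w' - zt) := hv k hk
  have hεk : ε k = L * ‖zt - w'‖ ^ 2 / 4 := hε k hk
  -- b ∈ B zt
  obtain ⟨b, hbB, hbeq⟩ := hres k hk
  have hbval : b = v k - F w' := by
    have hb2 : lam k • b = w' - lam k • F w' - zt := hbeq
    have hb3 : lam k • b = lam k • (v k - F w') := by
      rw [hvk, smul_sub, smul_inv_smul₀ hlamne, hb2]; abel
    exact smul_right_injective H hlamne hb3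
  have hbmem : v k - F w' ∈ B zt := hbval ▸ hbB
  -- key enlargement estimate for F
  have key : ∀ z' : H, ⟪zt - z', F w' - F z'⟫ ≥ -(ε k) := by
    intro z'
    have h1 : ⟪w' - z', F w' - F z'⟫ ≥ (1 / L) * ‖F w' - F z'‖ ^ 2 := hcoco _ _
    have h2 : ⟪zt - w', F w' - F z'⟫ ≥ -(‖zt - w'‖ * ‖F w' - F z'‖) := by
      have h3 := abs_real_inner_le_norm (zt - w') (F w' - F z')
      have h4 := neg_abs_le (⟪zt - w', F w' - F z'⟫ : ℝ)
      linarith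
    have hsplit : zt - z' = (w' - z') + (zt - w') := by abel
    rw [hsplit, inner_add_left]
    set a := ‖zt - w'‖
    set t := ‖F w' - F z'‖
    have hq : (1 / L) * t ^ 2 - a * t + L * a ^ 2 / 4 ≥ 0 := by
      have h5 := sq_nonneg (2 * t - L * a)
      have h6 : L * ((1 / L) * t ^ 2 - a * t + L * a ^ 2 / 4) = (2 * t - L * a) ^ 2 / 4 := by
        field_simp; ring
      nlinarith
    rw [hεk]
    linarith
  refine ⟨⟨F w', ?_, hbmem⟩, ?_, ?_, ?_, ?_⟩
  · intro z' v' hv'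
    rw [Set.mem_singleton_iff] at hv'
    rw [hv']
    exact key z'
  · intro z' v' hv'
    have hmono := hB.1 hbmem hv'
    have hdecomp : v k - v' = (F w' - F z') + ((v k - F w') - (v' - F z')) := by abel
    rw [hdecomp, inner_add_right]
    have := key z'
    linarith
  · rw [hvk, smul_inv_smul₀ hlamne]
    abel
  · rw [hεk]
    have ha := sq_nonneg ‖zt - w'‖
    have : lam k * L ≤ 2 * σ ^ 2 := (le_div_iff₀ hL).mp hlamle
    nlinarith
  · have hz' : z k = (1 - τ) • w' + τ • zt := hz k hk
    have hlv : lam k • v k = w' - zt := by rw [hvk, smul_inv_smul₀ hlamne]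
    have : (τ * lam k) • v k = τ • (w' - zt) := by rw [mul_smul, hlv]
    rw [this, hz']
    module
end
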